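/- Let z ∈ ℂ. Let P = (P_n)_{n≥-1} be the solution of the Jacobi equation at z with P_{-1} = 0, P_0 = 1, and let f = (f_n)_{n≥-1} and f' = (f'_n)_{n≥-1} be complex sequences such that f is a solution of the Jacobi equation at z and f' satisfies the differentiated equation a_{n-1} f'_{n-1} + b_n f'_n + a_n f'_{n+1} = z f'_n + f_n for all n ≥ 0 (with a_{-1} = 1/2). Then for every N ≥ 0, ∑_{n=0}^{N} f_n P_n = (1/2) f'_{-1} + a_N (P_N f'_{N+1} - P_{N+1} f'_N). -/

import Mathlib

open Filter Finset MeasureTheory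

noncomputable section

/-- Extended coefficient sequence with `a₋₁ = 1/2`. -/
def aext (a : ℕ → ℝ) : ℤ → ℝ := fun k => if k < 0 then 1/2 else a k.toNat

/-- `u : ℤ → ℂ` (restricted to indices `n ≥ -1`) solves the Jacobi equation
`a_{n-1} u_{n-1} + b_n u_n + a_n u_{n+1} = z u_n` for all `n ≥ 0`, with `a_{-1} = 1/2`. -/
def IsJacobiSol (a b : ℕ → ℝ) (z : ℂ) (u : ℤ → ℂ) : Prop :=
  ∀ n : ℕ, (aext a ((n : ℤ) - 1) : ℂ) * u ((n : ℤ) - 1) + (b n : ℂ) * u (n : ℤ)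
      + (a n : ℂ) * u ((n : ℤ) + 1) = z * u (n : ℤ)

/-- The perturbation `V = H - H₀` applied to a sequence:
`(Vf)_m = (a_{m-1} - 1/2) f_{m-1} + b_m f_m + (a_m - 1/2) f_{m+1}` with `a_{-1} = 1/2`. -/
def jV (a b : ℕ → ℝ) (f : ℤ → ℂ) (m : ℕ) : ℂ :=
  ((aext a ((m : ℤ) - 1) - 1/2 : ℝ) : ℂ) * f ((m : ℤ) - 1) + (b m : ℂ) * f (m : ℤ)
    + ((a m - 1/2 : ℝ) : ℂ) * f ((m : ℤ) + 1)

lemma aext_neg_one (a : ℕ → ℝ) : aext a (-1) = 1/2 := by simp [aext]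

lemma aext_nat (a : ℕ → ℝ) (n : ℕ) : aext a (n : ℤ) = a n := by simp [aext]

/-- the summation identity
`∑_{n=0}^N f_n P_n = (1/2) f'_{-1} + a_N (P_N f'_{N+1} - P_{N+1} f'_N)`, where `f'`
satisfies the differentiated Jacobi equation. -/
theorem summation_identity
    (a b : ℕ → ℝ) (ha : ∀ n, 0 < a n) (z : ℂ)
    (P : ℤ → ℂ) (hP : IsJacobiSol a b z P) (hPm : P (-1) = 0) (hP0 : P 0 = 1)
    (f : ℤ → ℂ) (hf : IsJacobiSol a b z f)
    (f' : ℤ → ℂ)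
    (hf' : ∀ n : ℕ, (aext a ((n : ℤ) - 1) : ℂ) * f' ((n : ℤ) - 1) + (b n : ℂ) * f' (n : ℤ)
        + (a n : ℂ) * f' ((n : ℤ) + 1) = z * f' (n : ℤ) + f (n : ℤ)) :
    ∀ N : ℕ, ∑ n ∈ Finset.range (N + 1), f (n : ℤ) * P (n : ℤ)
      = (1/2) * f' (-1)
        + (a N : ℂ) * (P (N : ℤ) * f' ((N : ℤ) + 1) - P ((N : ℤ) + 1) * f' (N : ℤ)) := by
  intro N
  induction N with
  | zero =>
      have h1 := hf' 0
      have h2 := hP 0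
      simp only [Nat.cast_zero, zero_sub, aext_neg_one, hPm, hP0] at h1 h2 ⊢
      push_cast at h1 h2 ⊢
      rw [Finset.sum_range_one]
      simp only [Nat.cast_zero, hP0, mul_one]
      -- h2 : b 0 + a 0 * P 1 = z
      -- h1 : 1/2 * f'(-1) + b 0 * f' 0 + a 0 * f' 1 = z * f' 0 + f 0
      have hz : (b 0 : ℂ) + (a 0 : ℂ) * P 1 = z := by
        simpa using h2
      linear_combination f' 0 * hz - h1
  | succ N ih =>
      rw [Finset.sum_range_succ, ih]
      have key1 := hf' (N + 1)
      have key2 := hP (N + 1)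
      have he : ((N + 1 : ℕ) : ℤ) - 1 = (N : ℤ) := by push_cast; ring
      rw [he, aext_nat] at key1 key2
      have he2 : ((N + 1 : ℕ) : ℤ) = (N : ℤ) + 1 := by push_cast; ring
      rw [he2] at key1 key2 ⊢
      linear_combination f' ((N : ℤ) + 1) * key2 - P ((N : ℤ) + 1) * key1
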